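/- Let Z(x0,x1,x2,x3,x4,x5) = x1·x2·x3·x4·x5 (the toy Boolean function). For the map on GF(2)^4 given by (e,f,g,h) ↦ (Z' ⊕ h, e, f, g), where Z' is any product of five variables that includes both e and f as factors, the polynomial P = h⊕g⊕f⊕e⊕fgh⊕egh⊕efh⊕efg is invariant: substituting the round update and expanding over GF(2) returns P. -/
import Mathlib


/-- The polynomial `P = h ⊕ g ⊕ f ⊕ e ⊕ fgh ⊕ egh ⊕ efh ⊕ efg` from Theorem 5.3.1. -/
def P (e f g h : ZMod 2) : ZMod 2 :=
  h + g + f + e + f*g*h + e*g*h + e*f*h + e*f*g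

/-- With `Z' = i·f·e·o·c` a degree-5 monomial containing both `e` and `f` as
factors, `P` is invariant under the round update `(e,f,g,h) ↦ (Z' ⊕ h, e, f, g)`. -/
theorem P_invariant_toy (e f g h i o c : ZMod 2) :
    P (i*f*e*o*c + h) e f g = P e f g h := by
  revert e f g h i o c; decide
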